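/- For every prime p, the Bell number B_p satisfies B_p ≡ 2 (mod p). -/
import Mathlib


/-- The Bell numbers: `bell n` is the number of partitions of an `n`-element set,
determined by `bell 0 = 1` and `bell (n+1) = ∑_{k=0}^{n} C(n,k) * bell k`. -/
def bell : ℕ → ℕ
  | 0 => 1
  | n + 1 => ∑ k ∈ (Finset.range (n + 1)).attach, n.choose k * bell k
decreasing_by exact Finset.mem_range.mp k.2

open Polynomial Finset

theorem bell_succ (n : ℕ) :
    bell (n + 1) = ∑ k ∈ Finset.range (n + 1), n.choose k * bell k := by
  rw [bell]
  exact Finset.sum_attach (Finset.range (n+1)) (fun k => n.choose k * bell k)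

section Phi
variable {R : Type*} [CommRing R]

/-- The umbral functional sending `X^n` to `bell n`. -/
noncomputable def phi : R[X] →+ R where
  toFun f := f.sum fun n c => c * (bell n : R)
  map_zero' := Polynomial.sum_zero_index _
  map_add' f g := Polynomial.sum_add_index f g (fun n c => c * (bell n : R))
    (fun _ => zero_mul _) (fun n b₁ b₂ => add_mul b₁ b₂ _)

theorem phi_monomial (n : ℕ) (c : R) : phi (monomial n c) = c * bell n :=
  Polynomial.sum_monomial_index c (fun n c => c * (bell n : R)) (zero_mul _)

theorem phi_X_pow (n : ℕ) : phi (X ^ n : R[X]) = bell n := by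
  rw [X_pow_eq_monomial, phi_monomial, one_mul]

theorem phi_C_mul (a : R) (f : R[X]) : phi (C a * f) = a * phi f := by
  induction f using Polynomial.induction_on' with
  | add f g hf hg => rw [mul_add, map_add, map_add, hf, hg, mul_add]
  | monomial n c => rw [C_mul_monomial, phi_monomial, phi_monomial, mul_assoc]

theorem phi_X_add_one_pow (n : ℕ) : phi ((X + 1 : R[X]) ^ n) = bell (n + 1) := by
  rw [add_pow, map_sum, bell_succ, Nat.cast_sum]
  refine Finset.sum_congr rfl fun k hk => ?_
  rw [one_pow, mul_one, ← C_eq_natCast, mul_comm, phi_C_mul, phi_X_pow]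
  push_cast
  ring

theorem phi_X_mul (f : R[X]) : phi (X * f) = phi (f.comp (X + 1)) := by
  induction f using Polynomial.induction_on' with
  | add f g hf hg => rw [mul_add, map_add, add_comp, map_add, hf, hg]
  | monomial n c =>
      rw [monomial_comp, phi_C_mul, phi_X_add_one_pow, mul_comm X, monomial_mul_X,
        phi_monomial]

/-- Falling factorial polynomial `X(X-1)⋯(X-n+1)`. -/
noncomputable def fall : ℕ → R[X]
  | 0 => 1
  | n + 1 => X * (fall n).comp (X - 1)

theorem phi_fall (n : ℕ) : phi (fall n : R[X]) = 1 := by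
  induction n with
  | zero =>
      show phi (1 : R[X]) = 1
      rw [← pow_zero (X : R[X]), phi_X_pow]
      simp [bell]
  | succ n ih =>
      rw [fall, phi_X_mul, comp_assoc]
      simp only [sub_comp, X_comp, one_comp, add_sub_cancel_right, comp_X]
      exact ih

theorem fall_eq_prod (n : ℕ) :
    (fall n : R[X]) = ∏ i ∈ Finset.range n, (X - C (i : R)) := by
  induction n with
  | zero => simp [fall]
  | succ n ih =>
      rw [fall, ih, Polynomial.prod_comp, Finset.prod_range_succ']
      rw [Nat.cast_zero, C_0, sub_zero, mul_comm]
      refine congrArg (· * X) (Finset.prod_congr rfl fun i _ => ?_)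
      rw [sub_comp, X_comp, C_comp, Nat.cast_succ, C_add, C_1]
      ring

end Phi

/-- For every prime `p`, `B_p ≡ 2 (mod p)`. -/
theorem bell_prime (p : ℕ) (hp : p.Prime) : (bell p : ZMod p) = 2 := by
  haveI := Fact.mk hp
  have hq : Fintype.card (ZMod p) = p := ZMod.card p
  have hroots : (X ^ p - X : (ZMod p)[X]).roots = Finset.univ.val := by
    have := FiniteField.roots_X_pow_card_sub_X (ZMod p)
    rwa [hq] at this
  have hmonic : (X ^ p - X : (ZMod p)[X]).Monic := by
    apply monic_X_pow_sub
    rw [degree_X]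
    exact_mod_cast hp.one_lt
  have hcard : Multiset.card (X ^ p - X : (ZMod p)[X]).roots
      = (X ^ p - X : (ZMod p)[X]).natDegree := by
    rw [hroots, FiniteField.X_pow_card_sub_X_natDegree_eq (ZMod p) hp.one_lt]
    simpa using hq
  have hprod : (∏ a : ZMod p, (X - C a)) = (X ^ p - X : (ZMod p)[X]) := by
    have := prod_multiset_X_sub_C_of_monic_of_roots_card_eq hmonic hcard
    rwa [hroots] at this
  have hrange : (∏ i ∈ Finset.range p, (X - C (i : ZMod p))) = ∏ a : ZMod p, (X - C a) := by
    refine Finset.prod_bij' (fun i _ => ((i : ZMod p)))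
      (fun a _ => a.val) (fun i _ => Finset.mem_univ _)
      (fun a _ => Finset.mem_range.mpr (ZMod.val_lt a)) ?_ ?_ (fun i _ => rfl)
    · intro i hi
      exact ZMod.val_cast_of_lt (Finset.mem_range.mp hi)
    · intro a _
      simp [ZMod.natCast_val, ZMod.cast_id]
  have key : phi (X ^ p - X : (ZMod p)[X]) = 1 := by
    rw [← hprod, ← hrange, ← fall_eq_prod]
    exact phi_fall p
  rw [map_sub, phi_X_pow] at key
  have hb1 : phi (X : (ZMod p)[X]) = 1 := by
    have h := phi_X_pow (R := ZMod p) 1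
    rw [pow_one] at h
    rw [h]
    norm_num [bell_succ, bell]
  rw [hb1] at key
  have : (bell p : ZMod p) = 1 + 1 := by linear_combination key
  rw [this]; norm_num
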